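/- Fix integers 0 < n₁ ≤ n₂ ≤ … ≤ n_m and a field k of characteristic zero, and let k[v], L_{ab}, R_{ab} and v^A be as follows: k[v] is the polynomial ring in variables v_{ij}, (i,j) ∈ Y_n̄; L_{ab} = Σ_j v_{aj} ∂/∂v_{bj} for 1 ≤ a < b ≤ n_m; R_{ab} = Σ_i v_{ib} ∂/∂v_{ia} for 1 ≤ a < b ≤ m; v^A = Π_{(i,j)} v_{ij}^{A_{ij}}. Let A : Y_n̄ → Z_{≥0} be an array with A_{ij} = 0 unless (i,j) ∈ Sc_n̄, and let λ be the partition obtained by sorting the multiset of values {A_s : s ∈ Sc_n̄} in non-increasing order. Then v^A lies in the smallest k-subspace of k[v] that contains all monomials v^B for B ∈ DL_n̄(μ) over all partitions μ with μ ≥ λ in the dominance order (|μ| = |λ|) and is invariant under all operators L_{ab} and R_{ab}. -/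

import Mathlib

/-- A composition of length `nn` is encoded as a function `ℕ → ℕ` vanishing from
index `nn` on (0-based indexing).  `IsSerpentine nn d lam mu` says that
`mu ∈ Ser^nn_{d,lam}` is a `d`-serpentine associated with `lam`. -/
def IsSerpentine (nn d : ℕ) (lam mu : ℕ → ℕ) : Prop :=
  (∀ i, nn ≤ i → lam i = 0) ∧
  (∀ i, nn ≤ i → mu i = 0) ∧
  (∀ i, lam i ≤ mu i) ∧
  (∑ i ∈ Finset.range nn, (mu i - lam i)) = d ∧
  (∀ i j, i < j → j < nn → lam i ≤ lam j → mu i ≤ lam j) ∧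
  (∀ i j, i < j → j < nn → lam j < lam i → lam i ≤ mu j → mu i = lam i)

/-- `domSum f s` is the sum of the `s` largest entries of a (finitely supported)
function `f : ℕ → ℕ`, i.e. the `s`-th partial sum of the dominant part `f₊`. -/
noncomputable def domSum (f : ℕ → ℕ) (s : ℕ) : ℕ :=
  sSup ((fun T : Finset ℕ => ∑ i ∈ T, f i) '' {T : Finset ℕ | T.card ≤ s})

/-- `f₊ = g₊`: the dominant parts (non-increasing reorderings, padded by trailing
zeros) of the finitely supported functions `f` and `g` coincide. -/
def DomEq (f g : ℕ → ℕ) : Prop := ∀ s, domSum f s = domSum g s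

/-- `f₊ ≤ g₊` in the dominance order: `|f| = |g|` and every partial sum of the
dominant part of `g` is at least the corresponding one for `f`. -/
def DomLE (f g : ℕ → ℕ) : Prop :=
  (∀ s, domSum f s ≤ domSum g s) ∧ ∃ N, ∀ s, N ≤ s → domSum f s = domSum g s

/-- The composition `(λ, d)`: append the entry `d` to a length-`n` composition. -/
def appendComp (n : ℕ) (lam : ℕ → ℕ) (d : ℕ) : ℕ → ℕ :=
  fun i => if i < n then lam i else if i = n then d else 0

/-- The composition `(d₁, …, d_m)`: truncate `d` to its first `m` entries. -/
def truncComp (m : ℕ) (d : ℕ → ℕ) : ℕ → ℕ := fun i => if i < m then d i else 0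

/-- A chain of iterated serpentines `μ⁽⁰⁾ = (0)`, `μ⁽ʲ⁾ ∈ Ser^{n_j}_{d_j, μ⁽ʲ⁻¹⁾}`. -/
def SerpChain (n : ℕ → ℕ) (m : ℕ) (d : ℕ → ℕ) (μ : ℕ → ℕ → ℕ) : Prop :=
  (∀ i, μ 0 i = 0) ∧ ∀ j, j < m → IsSerpentine (n j) (d j) (μ j) (μ (j + 1))

/-- `d̄ ∈ Z_{≥0}^m` is `n̄`-admissible: for each `s < m` the number of nonzero
entries among `d_0, …, d_s` is at most `n_s`. -/
def NAdmissible (n : ℕ → ℕ) (m : ℕ) (d : ℕ → ℕ) : Prop :=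
  ∀ s, s < m → ((Finset.range (s + 1)).filter (fun j => d j ≠ 0)).card ≤ n s

/-- Cells are pairs `(i, j)` (row `i`, column `j`, both 0-based); the Young diagram
`Y_n̄` consists of the cells with `j < m` and `i < n j`.  `IsSCorner n m Rr Rc c`
says that, after removing the rows in `Rr` and the columns in `Rc` from `Y_n̄`,
the cell `c` is a corner of the remaining (renumbered) Young diagram: it is the
lowest remaining cell of its column and the leftmost remaining cell of its row. -/
def IsSCorner (n : ℕ → ℕ) (m : ℕ) (Rr Rc : Set ℕ) (c : ℕ × ℕ) : Prop :=
  c.2 < m ∧ c.1 < n c.2 ∧ c.1 ∉ Rr ∧ c.2 ∉ Rc ∧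
  (∀ i, c.1 < i → i < n c.2 → i ∈ Rr) ∧
  (∀ j, j < c.2 → j ∉ Rc → n j ≤ c.1)

/-- An execution of the thin-hook removal process on `Y_n̄`: a list of cells, each
of which is a corner of the diagram remaining after deleting the rows and columns
of the previously recorded cells, such that at the end every cell of `Y_n̄` lies
in a removed row or in a removed column (the diagram is empty). -/
def IsExec (n : ℕ → ℕ) (m : ℕ) (l : List (ℕ × ℕ)) : Prop :=
  (∀ t (ht : t < l.length),
    IsSCorner n m {i | ∃ c ∈ l.take t, c.1 = i} {j | ∃ c ∈ l.take t, c.2 = j}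
      (l.get ⟨t, ht⟩)) ∧
  (∀ i j, j < m → i < n j → (∃ c ∈ l, c.1 = i) ∨ (∃ c ∈ l, c.2 = j))

/-- `S` is the set of staircase corners of `Y_n̄`: the recorded set of some
execution of the thin-hook removal process. -/
def IsScSet (n : ℕ → ℕ) (m : ℕ) (S : Set (ℕ × ℕ)) : Prop :=
  ∃ l : List (ℕ × ℕ), IsExec n m l ∧ S = {c | c ∈ l}

/-- The partial order on staircase corners: `(i,j) ⪯ (i',j')` iff `i ≤ i'` and
`j' ≤ j` (to increase, move down and to the left). -/
def ScLE (c c' : ℕ × ℕ) : Prop := c.1 ≤ c'.1 ∧ c'.2 ≤ c.2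

/-- A DL-dense array: an array supported on the staircase corners `S` which is
order-preserving for the staircase-corner order. -/
def DLDense (S : Set (ℕ × ℕ)) (R : ℕ × ℕ → ℕ) : Prop :=
  (∀ c, c ∉ S → R c = 0) ∧ ∀ c c', c ∈ S → c' ∈ S → ScLE c c' → R c ≤ R c'

/-- Vertical weight of an array: the sum of the entries in column `j`. -/
def vrtW (n : ℕ → ℕ) (R : ℕ × ℕ → ℕ) (j : ℕ) : ℕ := ∑ i ∈ Finset.range (n j), R (i, j)

/-- Horizontal weight of an array: the sum of the entries in row `i`. -/
def horW (m : ℕ) (R : ℕ × ℕ → ℕ) (i : ℕ) : ℕ := ∑ j ∈ Finset.range m, R (i, j)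

/-- The cells of the Young diagram `Y_n̄`, indexing the variables `v_{ij}` of the
polynomial ring `k[v]` (the symmetric algebra of the staircase matrices). -/
abbrev YCell (n : ℕ → ℕ) (m : ℕ) : Type := {c : ℕ × ℕ // c.2 < m ∧ c.1 < n c.2}

/-- The left operator `L_{ab} = Σ_j v_{aj} ∂/∂v_{bj}` (sum over the columns `j`
containing both rows `a` and `b`; when `a < b` this means `(b,j) ∈ Y_n̄`). -/
noncomputable def Lop (k : Type*) [Field k] (n : ℕ → ℕ) (m : ℕ) (a b : ℕ)
    (p : MvPolynomial (YCell n m) k) : MvPolynomial (YCell n m) k :=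
  ∑ j ∈ (Finset.range m).attach,
    if h : a < n j.1 ∧ b < n j.1 then
      MvPolynomial.X (⟨(a, j.1), ⟨Finset.mem_range.mp j.2, h.1⟩⟩ : YCell n m) *
        MvPolynomial.pderiv (⟨(b, j.1), ⟨Finset.mem_range.mp j.2, h.2⟩⟩ : YCell n m) p
    else 0

/-- The right operator `R_{ab} = Σ_i v_{ib} ∂/∂v_{ia}` (sum over the rows `i` with
`(i,a) ∈ Y_n̄`, which lie in column `b` as well whenever `a < b`). -/
noncomputable def Rop (k : Type*) [Field k] (n : ℕ → ℕ) (m : ℕ) (a b : ℕ)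
    (p : MvPolynomial (YCell n m) k) : MvPolynomial (YCell n m) k :=
  ∑ i ∈ (Finset.range (n a)).attach,
    if h : a < m ∧ b < m ∧ i.1 < n b then
      MvPolynomial.X (⟨(i.1, b), ⟨h.2.1, h.2.2⟩⟩ : YCell n m) *
        MvPolynomial.pderiv (⟨(i.1, a), ⟨h.1, Finset.mem_range.mp i.2⟩⟩ : YCell n m) p
    else 0

/-- The monomial `v^A = Π_{(i,j) ∈ Y_n̄} v_{ij}^{A_{ij}}` attached to an array `A`. -/
noncomputable def monArr (k : Type*) [Field k] (n : ℕ → ℕ) (m : ℕ)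
    (A : ℕ × ℕ → ℕ) : MvPolynomial (YCell n m) k :=
  ∏ j ∈ (Finset.range m).attach, ∏ i ∈ (Finset.range (n j.1)).attach,
    MvPolynomial.X
      (⟨(i.1, j.1), ⟨Finset.mem_range.mp j.2, Finset.mem_range.mp i.2⟩⟩ : YCell n m)
        ^ A (i.1, j.1)

namespace DLAux

open Finset

lemma sum_le_of_support {f : ℕ → ℕ} {R : ℕ} (h : ∀ r, R ≤ r → f r = 0) (T : Finset ℕ) :
    ∑ i ∈ T, f i ≤ ∑ i ∈ Finset.range R, f i := by
  calc ∑ i ∈ T, f i ≤ ∑ i ∈ T ∪ Finset.range R, f i :=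
        Finset.sum_le_sum_of_subset Finset.subset_union_left
    _ = ∑ i ∈ Finset.range R, f i := by
        refine (Finset.sum_subset Finset.subset_union_right ?_).symm
        intro x _ hx2
        exact h x (le_of_not_gt (by simpa using hx2))

lemma le_domSum {f : ℕ → ℕ} {R : ℕ} (h : ∀ r, R ≤ r → f r = 0) {s : ℕ} (T : Finset ℕ)
    (hT : T.card ≤ s) : ∑ i ∈ T, f i ≤ domSum f s :=
  le_csSup ⟨∑ i ∈ Finset.range R, f i, by
      rintro x ⟨T', hT', rfl⟩; exact sum_le_of_support h T'⟩ ⟨T, hT, rfl⟩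

lemma domSum_le {f : ℕ → ℕ} {s x : ℕ} (h : ∀ T : Finset ℕ, T.card ≤ s → ∑ i ∈ T, f i ≤ x) :
    domSum f s ≤ x :=
  csSup_le ⟨0, ⟨∅, by simp, by simp⟩⟩ (by rintro y ⟨T, hT, rfl⟩; exact h T hT)

lemma domSum_eq_total {f : ℕ → ℕ} {R : ℕ} (h : ∀ r, R ≤ r → f r = 0) {s : ℕ} (hs : R ≤ s) :
    domSum f s = ∑ i ∈ Finset.range R, f i :=
  le_antisymm (domSum_le fun T _ => sum_le_of_support h T)
    (le_domSum h (Finset.range R) (by simpa using hs))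

lemma domLE_refl (f : ℕ → ℕ) : DomLE f f := ⟨fun _ => le_rfl, 0, fun _ _ => rfl⟩

lemma domLE_trans {f g h : ℕ → ℕ} (h1 : DomLE f g) (h2 : DomLE g h) : DomLE f h := by
  obtain ⟨l1, N1, e1⟩ := h1
  obtain ⟨l2, N2, e2⟩ := h2
  exact ⟨fun s => (l1 s).trans (l2 s), max N1 N2,
    fun s hs => (e1 s (le_trans (le_max_left _ _) hs)).trans
      (e2 s (le_trans (le_max_right _ _) hs))⟩

/-- helper for the transfer lemma: the case `i ∈ T`, `i' ∉ T`. -/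
lemma transfer_aux {f g : ℕ → ℕ} {R i i' : ℕ}
    (hg : ∀ r, R ≤ r → g r = 0)
    (hoff : ∀ r, r ≠ i → r ≠ i' → f r = g r)
    (hmax : max (f i) (f i') ≤ max (g i) (g i')) {s : ℕ} (T : Finset ℕ)
    (hT : T.card ≤ s) (hiT : i ∈ T) (hi'T : i' ∉ T) :
    ∑ r ∈ T, f r ≤ domSum g s := by
  classical
  set j : ℕ := if g i ≤ g i' then i' else i with hj
  have hgj : g j = max (g i) (g i') := by
    rw [hj]; split_ifs with h
    · exact (max_eq_right h).symm
    · exact (max_eq_left (le_of_not_ge h)).symm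
  have hjT : j ∉ T.erase i := by
    rw [hj]; split
    · exact fun hc => hi'T (Finset.mem_of_mem_erase hc)
    · exact Finset.notMem_erase i T
  have htail : ∑ r ∈ T.erase i, f r = ∑ r ∈ T.erase i, g r := by
    refine Finset.sum_congr rfl fun r hr => ?_
    have h1 : r ≠ i := Finset.ne_of_mem_erase hr
    have h2 : r ≠ i' := fun hrr => hi'T (hrr ▸ Finset.mem_of_mem_erase hr)
    exact hoff r h1 h2
  have hsum : ∑ r ∈ T, f r = f i + ∑ r ∈ T.erase i, f r :=
    (Finset.add_sum_erase T f hiT).symm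
  have hine : f i + ∑ r ∈ T.erase i, g r ≤ g j + ∑ r ∈ T.erase i, g r := by
    exact Nat.add_le_add_right
      (le_trans (le_trans (le_max_left _ _) hmax) (le_of_eq hgj.symm)) _
  have hins : g j + ∑ r ∈ T.erase i, g r = ∑ r ∈ insert j (T.erase i), g r :=
    (Finset.sum_insert hjT).symm
  have hcard : (insert j (T.erase i)).card ≤ s := by
    have h1 := Finset.card_insert_le j (T.erase i)
    have h2 := Finset.card_erase_of_mem hiT
    have h3 : 1 ≤ T.card := Finset.card_pos.mpr ⟨i, hiT⟩
    omega
  calc ∑ r ∈ T, f r = f i + ∑ r ∈ T.erase i, g r := by rw [hsum, htail]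
    _ ≤ g j + ∑ r ∈ T.erase i, g r := hine
    _ = ∑ r ∈ insert j (T.erase i), g r := hins
    _ ≤ domSum g s := le_domSum hg _ hcard

lemma domSum_transfer_le {f g : ℕ → ℕ} {R i i' : ℕ}
    (hf : ∀ r, R ≤ r → f r = 0) (hg : ∀ r, R ≤ r → g r = 0)
    (hii : i ≠ i') (hoff : ∀ r, r ≠ i → r ≠ i' → f r = g r)
    (hsum : f i + f i' = g i + g i')
    (hmax : max (f i) (f i') ≤ max (g i) (g i')) (s : ℕ) :
    domSum f s ≤ domSum g s := by
  classical
  refine domSum_le fun T hT => ?_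
  by_cases hiT : i ∈ T <;> by_cases hi'T : i' ∈ T
  · -- both in T : sums are equal
    have h1 : ∑ r ∈ T, f r = f i + (f i' + ∑ r ∈ (T.erase i).erase i', f r) := by
      rw [Finset.add_sum_erase _ f (Finset.mem_erase.mpr ⟨Ne.symm hii, hi'T⟩),
        Finset.add_sum_erase _ f hiT]
    have h2 : ∑ r ∈ T, g r = g i + (g i' + ∑ r ∈ (T.erase i).erase i', g r) := by
      rw [Finset.add_sum_erase _ g (Finset.mem_erase.mpr ⟨Ne.symm hii, hi'T⟩),
        Finset.add_sum_erase _ g hiT]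
    have htail : ∑ r ∈ (T.erase i).erase i', f r = ∑ r ∈ (T.erase i).erase i', g r := by
      refine Finset.sum_congr rfl fun r hr => ?_
      exact hoff r (Finset.ne_of_mem_erase (Finset.mem_of_mem_erase hr))
        (Finset.ne_of_mem_erase hr)
    have : ∑ r ∈ T, f r = ∑ r ∈ T, g r := by omega
    rw [this]; exact le_domSum hg T hT
  · exact transfer_aux hg hoff hmax T hT hiT hi'T
  · refine transfer_aux (i := i') (i' := i) hg (fun r h1 h2 => hoff r h2 h1) ?_ T hT hi'T hiT
    rw [max_comm (f i') (f i), max_comm (g i') (g i)]; exact hmax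
  · have : ∑ r ∈ T, f r = ∑ r ∈ T, g r := by
      refine Finset.sum_congr rfl fun r hr => ?_
      exact hoff r (fun h => hiT (h ▸ hr)) (fun h => hi'T (h ▸ hr))
    rw [this]; exact le_domSum hg T hT

lemma domLE_transfer {f g : ℕ → ℕ} {R i i' : ℕ}
    (hf : ∀ r, R ≤ r → f r = 0) (hg : ∀ r, R ≤ r → g r = 0)
    (hii : i ≠ i') (hiR : i < R) (hi'R : i' < R)
    (hoff : ∀ r, r ≠ i → r ≠ i' → f r = g r)
    (hsum : f i + f i' = g i + g i')
    (hmax : max (f i) (f i') ≤ max (g i) (g i')) :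
    DomLE f g := by
  classical
  have htot : ∑ r ∈ Finset.range R, f r = ∑ r ∈ Finset.range R, g r := by
    have hiT : i ∈ Finset.range R := Finset.mem_range.mpr hiR
    have hi'T : i' ∈ (Finset.range R).erase i :=
      Finset.mem_erase.mpr ⟨Ne.symm hii, Finset.mem_range.mpr hi'R⟩
    rw [← Finset.add_sum_erase _ f hiT, ← Finset.add_sum_erase _ f hi'T,
      ← Finset.add_sum_erase _ g hiT, ← Finset.add_sum_erase _ g hi'T]
    have htail : ∑ r ∈ ((Finset.range R).erase i).erase i', f r
        = ∑ r ∈ ((Finset.range R).erase i).erase i', g r := by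
      refine Finset.sum_congr rfl fun r hr => ?_
      exact hoff r (Finset.ne_of_mem_erase (Finset.mem_of_mem_erase hr))
        (Finset.ne_of_mem_erase hr)
    omega
  exact ⟨domSum_transfer_le hf hg hii hoff hsum hmax, R, fun s hs => by
    rw [domSum_eq_total hf hs, domSum_eq_total hg hs, htot]⟩

end DLAux
namespace DLAux

lemma alt_sum_choose {K : Type*} [CommRing K] :
    ∀ qp p t : ℕ, qp < p →
      ∑ α ∈ Finset.range (qp+1), (-1:K)^α * (qp.choose α : K) * ((p - α).choose t : K)
        = if qp ≤ t then (((p - qp).choose (t - qp) : ℕ) : K) else 0 := by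
  intro qp
  induction qp with
  | zero =>
    intro p t _
    simp
  | succ q ih =>
    intro p t hp
    have hq : q < p := by omega
    have hq' : q < p - 1 := by omega
    have hfg : ∀ α : ℕ, (-1:K)^(α+1) * ((q+1).choose (α+1) : K) * ((p - (α+1)).choose t : K)
        = -((-1:K)^α * (q.choose α : K) * ((p - 1 - α).choose t : K))
          - ((-1:K)^α * (q.choose (α+1) : K) * ((p - 1 - α).choose t : K)) := by
      intro α
      have hsub : p - (α+1) = p - 1 - α := by omega
      rw [hsub, Nat.choose_succ_succ q α]
      push_cast
      ring
    have hga : ∀ α : ℕ, (-1:K)^(α+1) * (q.choose (α+1) : K) * ((p - (α+1)).choose t : K)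
        = -((-1:K)^α * (q.choose (α+1) : K) * ((p - 1 - α).choose t : K)) := by
      intro α
      have hsub : p - (α+1) = p - 1 - α := by omega
      rw [hsub]
      push_cast
      ring
    have hS2 : ∑ α ∈ Finset.range (q+1), (-1:K)^α * (q.choose (α+1) : K) * ((p - 1 - α).choose t : K)
        = (p.choose t : K) - ∑ α ∈ Finset.range (q+1), (-1:K)^α * (q.choose α : K) * ((p - α).choose t : K) := by
      rw [Finset.sum_range_succ' (fun α => (-1:K)^α * (q.choose α : K) * ((p - α).choose t : K)) q]
      rw [Finset.sum_range_succ (fun α => (-1:K)^α * (q.choose (α+1) : K) * ((p - 1 - α).choose t : K)) q]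
      rw [Nat.choose_succ_self q]
      have : ∑ α ∈ Finset.range q, (-1:K)^(α+1) * (q.choose (α+1) : K) * ((p - (α+1)).choose t : K)
          = ∑ α ∈ Finset.range q, -((-1:K)^α * (q.choose (α+1) : K) * ((p - 1 - α).choose t : K)) :=
        Finset.sum_congr rfl fun α _ => hga α
      rw [this, Finset.sum_neg_distrib]
      simp
    have hmain : ∑ α ∈ Finset.range (q+1+1), (-1:K)^α * ((q+1).choose α : K) * ((p - α).choose t : K)
        = (∑ α ∈ Finset.range (q+1), (-1:K)^α * (q.choose α : K) * ((p - α).choose t : K))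
          - ∑ α ∈ Finset.range (q+1), (-1:K)^α * (q.choose α : K) * ((p - 1 - α).choose t : K) := by
      rw [Finset.sum_range_succ' (fun α => (-1:K)^α * ((q+1).choose α : K) * ((p - α).choose t : K)) (q+1)]
      have : ∑ α ∈ Finset.range (q+1), (-1:K)^(α+1) * ((q+1).choose (α+1) : K) * ((p - (α+1)).choose t : K)
          = ∑ α ∈ Finset.range (q+1), (-((-1:K)^α * (q.choose α : K) * ((p - 1 - α).choose t : K))
            - ((-1:K)^α * (q.choose (α+1) : K) * ((p - 1 - α).choose t : K))) :=
        Finset.sum_congr rfl fun α _ => hfg α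
      rw [this, Finset.sum_sub_distrib, Finset.sum_neg_distrib, hS2]
      simp
      ring
    rw [hmain, ih p t hq, ih (p-1) t hq']
    by_cases h1 : q + 1 ≤ t
    · rw [if_pos (by omega : q ≤ t), if_pos (by omega : q ≤ t), if_pos h1]
      have e1 : p - q = (p - 1 - q) + 1 := by omega
      have e2 : t - q = (t - 1 - q) + 1 := by omega
      have e3 : p - 1 - q = p - (q+1) := by omega
      have e4 : t - 1 - q = t - (q+1) := by omega
      rw [e1, e2, Nat.choose_succ_succ (p-1-q) (t-1-q), e3, e4]
      push_cast
      ring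
    · by_cases h2 : q ≤ t
      · have ht : t = q := by omega
        rw [if_pos h2, if_pos h2, if_neg h1, ht]
        simp [Nat.sub_self]
      · rw [if_neg h2, if_neg h2, if_neg h1]
        ring

lemma coef_id (kk q t : ℕ) (h : t ≤ kk) :
    kk.choose t * (q.descFactorial t) * (kk.descFactorial (kk - t))
      = kk.factorial * (kk.choose t * q.choose t) := by
  rw [Nat.descFactorial_eq_factorial_mul_choose q t,
    Nat.descFactorial_eq_factorial_mul_choose kk (kk-t), Nat.choose_symm h,
    ← Nat.choose_mul_factorial_mul_factorial h]
  ring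

end DLAux
namespace DLAux

open MvPolynomial

variable {k : Type*} [Field k] {n : ℕ → ℕ} {m : ℕ}

lemma prod_monomial_one {ι : Type*} (s : Finset ι) (f : ι → (YCell n m →₀ ℕ)) :
    (∏ x ∈ s, monomial (f x) (1:k)) = monomial (∑ x ∈ s, f x) (1:k) := by
  classical
  induction s using Finset.induction_on with
  | empty => simp
  | insert _ _ hx ih => rw [Finset.prod_insert hx, Finset.sum_insert hx, ih, monomial_mul, one_mul]

noncomputable def expF (n : ℕ → ℕ) (m : ℕ) (A : ℕ × ℕ → ℕ) : YCell n m →₀ ℕ :=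
  ∑ j ∈ (Finset.range m).attach, ∑ i ∈ (Finset.range (n j.1)).attach,
    Finsupp.single
      (⟨(i.1, j.1), ⟨Finset.mem_range.mp j.2, Finset.mem_range.mp i.2⟩⟩ : YCell n m)
      (A (i.1, j.1))

lemma monArr_eq (A : ℕ × ℕ → ℕ) : monArr k n m A = monomial (expF n m A) (1:k) := by
  rw [monArr, expF, ← prod_monomial_one]
  refine Finset.prod_congr rfl fun j _ => ?_
  rw [← prod_monomial_one]
  refine Finset.prod_congr rfl fun i _ => ?_
  rw [X_pow_eq_monomial]

lemma expF_apply (A : ℕ × ℕ → ℕ) (c : YCell n m) : expF n m A c = A c.1 := by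
  obtain ⟨⟨ci, cj⟩, hcj, hci⟩ := c
  rw [expF, Finsupp.finset_sum_apply]
  rw [Finset.sum_eq_single (⟨cj, Finset.mem_range.mpr hcj⟩ : {x // x ∈ Finset.range m})]
  · rw [Finsupp.finset_sum_apply]
    rw [Finset.sum_eq_single (⟨ci, Finset.mem_range.mpr hci⟩ : {x // x ∈ Finset.range (n cj)})]
    · rw [Finsupp.single_apply, if_pos rfl]
    · intro b _ hb
      rw [Finsupp.single_apply, if_neg]
      intro hcc
      apply hb
      have h2 : b.1 = ci := by
        have h3 := (Subtype.ext_iff.mp hcc)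
        exact ((Prod.ext_iff.mp h3).1)
      exact Subtype.ext h2
    · intro h; exact absurd (Finset.mem_attach _ _) h
  · intro jx _ hj
    rw [Finsupp.finset_sum_apply]
    refine Finset.sum_eq_zero fun ix _ => ?_
    rw [Finsupp.single_apply, if_neg]
    intro hcc
    apply hj
    have h2 : jx.1 = cj := by
      have h3 := (Subtype.ext_iff.mp hcc)
      exact ((Prod.ext_iff.mp h3).2)
    exact Subtype.ext h2
  · intro h; exact absurd (Finset.mem_attach _ _) h

lemma expF_add (A B : ℕ × ℕ → ℕ) :
    expF n m (fun z => A z + B z) = expF n m A + expF n m B := by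
  rw [expF, expF, expF, ← Finset.sum_add_distrib]
  refine Finset.sum_congr rfl fun j _ => ?_
  rw [← Finset.sum_add_distrib]
  exact Finset.sum_congr rfl fun i _ => Finsupp.single_add _ _ _

lemma expF_indicator (z₀ : ℕ × ℕ) (hz : z₀.2 < m ∧ z₀.1 < n z₀.2) (v : ℕ) :
    expF n m (fun z => if z = z₀ then v else 0) = Finsupp.single (⟨z₀, hz⟩ : YCell n m) v := by
  ext c
  rw [expF_apply, Finsupp.single_apply]
  by_cases h : c.1 = z₀
  · rw [if_pos h, if_pos (Subtype.ext h.symm : (⟨z₀,hz⟩ : YCell n m) = c)]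
  · rw [if_neg h, if_neg (fun hc => h (by rw [← Subtype.ext_iff.mp hc]))]

lemma Lop_sum {ι : Type*} (s : Finset ι) (f : ι → MvPolynomial (YCell n m) k) (a b : ℕ) :
    Lop k n m a b (∑ x ∈ s, f x) = ∑ x ∈ s, Lop k n m a b (f x) := by
  unfold Lop
  rw [Finset.sum_comm]
  refine Finset.sum_congr rfl fun j _ => ?_
  split_ifs with h
  · rw [map_sum, Finset.mul_sum]
  · simp

lemma Rop_monomial (a b : ℕ) (ham : a < m) (hbm : b < m) (hnab : ∀ iv, iv < n a → iv < n b)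
    (E : YCell n m →₀ ℕ) (r : k) :
    Rop k n m a b (monomial E r) =
      ∑ iv ∈ Finset.range (n a),
        (if h : iv < n a ∧ iv < n b then
          monomial (Finsupp.single (⟨(iv,b),⟨hbm,h.2⟩⟩ : YCell n m) 1
              + (E - Finsupp.single (⟨(iv,a),⟨ham,h.1⟩⟩ : YCell n m) 1))
            (r * ((E ⟨(iv,a),⟨ham,h.1⟩⟩ : ℕ) : k))
        else 0) := by
  rw [Rop, ← Finset.sum_attach (Finset.range (n a))
    (fun iv => if h : iv < n a ∧ iv < n b then
      monomial (Finsupp.single (⟨(iv,b),⟨hbm,h.2⟩⟩ : YCell n m) 1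
          + (E - Finsupp.single (⟨(iv,a),⟨ham,h.1⟩⟩ : YCell n m) 1))
        (r * ((E ⟨(iv,a),⟨ham,h.1⟩⟩ : ℕ) : k))
      else 0)]
  refine Finset.sum_congr rfl fun iv _ => ?_
  have hia : iv.1 < n a := Finset.mem_range.mp iv.2
  rw [dif_pos ⟨ham, hbm, hnab _ hia⟩, dif_pos ⟨hia, hnab _ hia⟩, pderiv_monomial,
    ← pow_one (X (⟨(iv.1,b),⟨hbm, hnab _ hia⟩⟩ : YCell n m)), X_pow_eq_monomial,
    monomial_mul, one_mul]

lemma Lop_monomial (a b : ℕ) (hab : a < b) (E : YCell n m →₀ ℕ) (r : k) :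
    Lop k n m a b (monomial E r) =
      ∑ jv ∈ Finset.range m,
        (if h : jv < m ∧ a < n jv ∧ b < n jv then
          monomial (Finsupp.single (⟨(a,jv),⟨h.1,h.2.1⟩⟩ : YCell n m) 1
              + (E - Finsupp.single (⟨(b,jv),⟨h.1,h.2.2⟩⟩ : YCell n m) 1))
            (r * ((E ⟨(b,jv),⟨h.1,h.2.2⟩⟩ : ℕ) : k))
        else 0) := by
  rw [Lop, ← Finset.sum_attach (Finset.range m)
    (fun jv => if h : jv < m ∧ a < n jv ∧ b < n jv then
      monomial (Finsupp.single (⟨(a,jv),⟨h.1,h.2.1⟩⟩ : YCell n m) 1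
          + (E - Finsupp.single (⟨(b,jv),⟨h.1,h.2.2⟩⟩ : YCell n m) 1))
        (r * ((E ⟨(b,jv),⟨h.1,h.2.2⟩⟩ : ℕ) : k))
      else 0)]
  refine Finset.sum_congr rfl fun jv _ => ?_
  have hjm : jv.1 < m := Finset.mem_range.mp jv.2
  by_cases hb : b < n jv.1
  · have ha : a < n jv.1 := lt_trans hab hb
    rw [dif_pos ⟨ha, hb⟩, dif_pos ⟨hjm, ha, hb⟩, pderiv_monomial,
      ← pow_one (X (⟨(a,jv.1),⟨hjm, ha⟩⟩ : YCell n m)), X_pow_eq_monomial,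
      monomial_mul, one_mul]
  · rw [dif_neg (fun hc => hb hc.2), dif_neg (fun hc => hb hc.2.2)]

noncomputable def Dst (n : ℕ → ℕ) (m : ℕ) (Abase : ℕ × ℕ → ℕ) (u w x y : YCell n m)
    (s t a b : ℕ) : YCell n m →₀ ℕ :=
  expF n m Abase + Finsupp.single u s + Finsupp.single w t
    + Finsupp.single x a + Finsupp.single y b

lemma Dst_apply (Abase : ℕ × ℕ → ℕ) (u w x y : YCell n m) (s t a b : ℕ) (c : YCell n m) :
    Dst n m Abase u w x y s t a b c =
      Abase c.1 + (if u = c then s else 0) + (if w = c then t else 0)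
        + (if x = c then a else 0) + (if y = c then b else 0) := by
  simp [Dst, Finsupp.add_apply, Finsupp.single_apply, expF_apply]

end DLAux
namespace DLAux

open MvPolynomial

variable {k : Type*} [Field k] {n : ℕ → ℕ} {m : ℕ}

lemma Dst_exch (Abase : ℕ × ℕ → ℕ) (u w x y p1 p2 : YCell n m) (s t a b : ℕ)
    (vu vw vx vy : ℕ → ℕ)
    (hv : ∀ c : YCell n m, (if p1 = c then 1 else 0) +
        (Abase c.1 + (if u = c then s else 0) + (if w = c then t else 0)
          + (if x = c then a else 0) + (if y = c then b else 0)
          - (if p2 = c then 1 else 0))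
      = Abase c.1 + (if u = c then vu s else 0) + (if w = c then vw t else 0)
          + (if x = c then vx a else 0) + (if y = c then vy b else 0)) :
    Finsupp.single p1 1 + (Dst n m Abase u w x y s t a b - Finsupp.single p2 1)
      = Dst n m Abase u w x y (vu s) (vw t) (vx a) (vy b) := by
  ext c
  rw [Finsupp.add_apply, Finsupp.tsub_apply, Dst_apply, Dst_apply,
    Finsupp.single_apply, Finsupp.single_apply]
  exact hv c

lemma Dst_R1 (Abase : ℕ × ℕ → ℕ) (u w x y : YCell n m) (s t a b : ℕ)
    (hxu : x ≠ u) (hwu : w ≠ u) (hyu : y ≠ u) (hAu : Abase u.1 = 0) :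
    Finsupp.single x 1 + (Dst n m Abase u w x y s t a b - Finsupp.single u 1)
      = Dst n m Abase u w x y (s-1) t (a+1) b := by
  refine Dst_exch Abase u w x y x u s t a b (· - 1) id (· + 1) id fun c => ?_
  by_cases hu : u = c
  · subst hu
    simp only [id_eq, if_neg hxu, if_neg hwu, if_neg hyu, if_pos rfl, if_true, hAu]
    omega
  · simp only [id_eq, if_neg hu]
    by_cases hx : x = c
    · simp only [id_eq, if_pos hx]; omega
    · simp only [id_eq, if_neg hx]; omega

lemma Dst_R2 (Abase : ℕ × ℕ → ℕ) (u w x y : YCell n m) (s t a b : ℕ)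
    (hwy : w ≠ y) (huy : u ≠ y) (hxy : x ≠ y) (hAy : Abase y.1 = 0) :
    Finsupp.single w 1 + (Dst n m Abase u w x y s t a b - Finsupp.single y 1)
      = Dst n m Abase u w x y s (t+1) a (b-1) := by
  refine Dst_exch Abase u w x y w y s t a b id (· + 1) id (· - 1) fun c => ?_
  by_cases hy : y = c
  · subst hy
    simp only [id_eq, if_neg hwy, if_neg huy, if_neg hxy, if_pos rfl, if_true, hAy]
    omega
  · simp only [id_eq, if_neg hy]
    by_cases hw : w = c
    · simp only [id_eq, if_pos hw]; omega
    · simp only [id_eq, if_neg hw]; omega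

lemma Dst_L1 (Abase : ℕ × ℕ → ℕ) (u w x y : YCell n m) (s t a b : ℕ)
    (huy : u ≠ y) (hwy : w ≠ y) (hxy : x ≠ y) (hAy : Abase y.1 = 0) :
    Finsupp.single u 1 + (Dst n m Abase u w x y s t a b - Finsupp.single y 1)
      = Dst n m Abase u w x y (s+1) t a (b-1) := by
  refine Dst_exch Abase u w x y u y s t a b (· + 1) id id (· - 1) fun c => ?_
  by_cases hy : y = c
  · subst hy
    simp only [id_eq, if_neg huy, if_neg hwy, if_neg hxy, if_pos rfl, if_true, hAy]
    omega
  · simp only [id_eq, if_neg hy]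
    by_cases hu : u = c
    · simp only [id_eq, if_pos hu]; omega
    · simp only [id_eq, if_neg hu]; omega

lemma Dst_L2 (Abase : ℕ × ℕ → ℕ) (u w x y : YCell n m) (s t a b : ℕ)
    (hxw : x ≠ w) (huw : u ≠ w) (hyw : y ≠ w) (hAw : Abase w.1 = 0) :
    Finsupp.single x 1 + (Dst n m Abase u w x y s t a b - Finsupp.single w 1)
      = Dst n m Abase u w x y s (t-1) (a+1) b := by
  refine Dst_exch Abase u w x y x w s t a b id (· - 1) (· + 1) id fun c => ?_
  by_cases hw : w = c
  · subst hw
    simp only [id_eq, if_neg hxw, if_neg huw, if_neg hyw, if_pos rfl, if_true, hAw]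
    omega
  · simp only [id_eq, if_neg hw]
    by_cases hx : x = c
    · simp only [id_eq, if_pos hx]; omega
    · simp only [id_eq, if_neg hx]; omega

end DLAux
namespace DLAux

open MvPolynomial

variable {k : Type*} [Field k] {n : ℕ → ℕ} {m : ℕ}
variable {i i' j j' : ℕ} {Abase : ℕ × ℕ → ℕ}

lemma Rstep (hmono : ∀ a b, a ≤ b → b < m → n a ≤ n b)
    (u w x y : YCell n m)
    (hu : u.1 = (i,j')) (hw : w.1 = (i',j)) (hx : x.1 = (i,j)) (hy : y.1 = (i',j'))
    (hii : i < i') (hjj : j' < j) (hjm : j < m)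
    (hcol' : ∀ iv, Abase (iv, j') = 0)
    (s t a b : ℕ) (r : k) :
    Rop k n m j' j (monomial (Dst n m Abase u w x y s t a b) r)
      = monomial (Dst n m Abase u w x y (s-1) t (a+1) b) (r * s)
        + monomial (Dst n m Abase u w x y s (t+1) a (b-1)) (r * b) := by
  classical
  have hj'm : j' < m := lt_trans hjj hjm
  have hiu : i < n j' := by have h2 := u.2.2; rw [hu] at h2; exact h2
  have hinj' : i' < n j' := by have h2 := y.2.2; rw [hy] at h2; exact h2
  have hnab : ∀ iv, iv < n j' → iv < n j :=
    fun iv h => lt_of_lt_of_le h (hmono j' j (le_of_lt hjj) hjm)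
  have hne : i ≠ i' := ne_of_lt hii
  have hjne : j' ≠ j := ne_of_lt hjj
  have hxu : x ≠ u := by simp only [ne_eq, Subtype.ext_iff, hx, hu, Prod.mk.injEq]; omega
  have hwu : w ≠ u := by simp only [ne_eq, Subtype.ext_iff, hw, hu, Prod.mk.injEq]; omega
  have hyu : y ≠ u := by simp only [ne_eq, Subtype.ext_iff, hy, hu, Prod.mk.injEq]; omega
  have hwy : w ≠ y := by simp only [ne_eq, Subtype.ext_iff, hw, hy, Prod.mk.injEq]; omega
  have huy : u ≠ y := by simp only [ne_eq, Subtype.ext_iff, hu, hy, Prod.mk.injEq]; omega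
  have hxy : x ≠ y := by simp only [ne_eq, Subtype.ext_iff, hx, hy, Prod.mk.injEq]; omega
  have hAu : Abase u.1 = 0 := by rw [hu]; exact hcol' i
  have hAy : Abase y.1 = 0 := by rw [hy]; exact hcol' i'
  rw [Rop_monomial j' j hj'm hjm hnab]
  have hsub : ({i, i'} : Finset ℕ) ⊆ Finset.range (n j') := by
    intro z hz
    rcases Finset.mem_insert.mp hz with h | h
    · exact Finset.mem_range.mpr (h ▸ hiu)
    · exact Finset.mem_range.mpr ((Finset.mem_singleton.mp h) ▸ hinj')
  rw [← Finset.sum_subset hsub (fun iv hiv hiv2 => ?_)]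
  swap
  · -- vanishing off {i, i'}
    have hiva : iv < n j' := Finset.mem_range.mp hiv
    have h1 : iv ≠ i := fun h => hiv2 (by simp [h])
    have h2 : iv ≠ i' := fun h => hiv2 (by simp [h])
    rw [dif_pos ⟨hiva, hnab _ hiva⟩]
    have hval : (Dst n m Abase u w x y s t a b) ⟨(iv,j'),⟨hj'm,hiva⟩⟩ = 0 := by
      rw [Dst_apply]
      rw [if_neg (by simp only [Subtype.ext_iff, hu, Prod.mk.injEq]; omega),
        if_neg (by simp only [Subtype.ext_iff, hw, Prod.mk.injEq]; omega),
        if_neg (by simp only [Subtype.ext_iff, hx, Prod.mk.injEq]; omega),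
        if_neg (by simp only [Subtype.ext_iff, hy, Prod.mk.injEq]; omega)]
      simp [hcol' iv]
    rw [hval]
    simp
  · rw [Finset.sum_pair hne, dif_pos ⟨hiu, hnab _ hiu⟩, dif_pos ⟨hinj', hnab _ hinj'⟩]
    have e1 : (⟨(i,j'),⟨hj'm,hiu⟩⟩ : YCell n m) = u := Subtype.ext hu.symm
    have e2 : (⟨(i,j),⟨hjm, hnab _ hiu⟩⟩ : YCell n m) = x := Subtype.ext hx.symm
    have e3 : (⟨(i',j'),⟨hj'm,hinj'⟩⟩ : YCell n m) = y := Subtype.ext hy.symm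
    have e4 : (⟨(i',j),⟨hjm, hnab _ hinj'⟩⟩ : YCell n m) = w := Subtype.ext hw.symm
    rw [e1, e2, e3, e4]
    have hvu : (Dst n m Abase u w x y s t a b) u = s := by
      rw [Dst_apply, if_pos rfl, if_neg hwu, if_neg hxu, if_neg hyu, hAu]; omega
    have hvy : (Dst n m Abase u w x y s t a b) y = b := by
      rw [Dst_apply, if_pos rfl, if_neg huy, if_neg hwy, if_neg hxy, hAy]; omega
    rw [hvu, hvy, Dst_R1 Abase u w x y s t a b hxu hwu hyu hAu,
      Dst_R2 Abase u w x y s t a b hwy huy hxy hAy]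

lemma Lstep (u w x y : YCell n m)
    (hu : u.1 = (i,j')) (hw : w.1 = (i',j)) (hx : x.1 = (i,j)) (hy : y.1 = (i',j'))
    (hii : i < i') (hjj : j' < j) (hjm : j < m)
    (hrow' : ∀ jv, Abase (i', jv) = 0)
    (s t a b : ℕ) (r : k) :
    Lop k n m i i' (monomial (Dst n m Abase u w x y s t a b) r)
      = monomial (Dst n m Abase u w x y (s+1) t a (b-1)) (r * b)
        + monomial (Dst n m Abase u w x y s (t-1) (a+1) b) (r * t) := by
  classical
  have hj'm : j' < m := lt_trans hjj hjm
  have hiu : i < n j' := by have h2 := u.2.2; rw [hu] at h2; exact h2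
  have hinj' : i' < n j' := by have h2 := y.2.2; rw [hy] at h2; exact h2
  have hinj : i' < n j := by have h2 := w.2.2; rw [hw] at h2; exact h2
  have hij : i < n j := by have h2 := x.2.2; rw [hx] at h2; exact h2
  have hne : i ≠ i' := ne_of_lt hii
  have hjne : j' ≠ j := ne_of_lt hjj
  have hxu : x ≠ u := by simp only [ne_eq, Subtype.ext_iff, hx, hu, Prod.mk.injEq]; omega
  have huw : u ≠ w := by simp only [ne_eq, Subtype.ext_iff, hu, hw, Prod.mk.injEq]; omega
  have hwy : w ≠ y := by simp only [ne_eq, Subtype.ext_iff, hw, hy, Prod.mk.injEq]; omega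
  have huy : u ≠ y := by simp only [ne_eq, Subtype.ext_iff, hu, hy, Prod.mk.injEq]; omega
  have hxy : x ≠ y := by simp only [ne_eq, Subtype.ext_iff, hx, hy, Prod.mk.injEq]; omega
  have hxw : x ≠ w := by simp only [ne_eq, Subtype.ext_iff, hx, hw, Prod.mk.injEq]; omega
  have hAy : Abase y.1 = 0 := by rw [hy]; exact hrow' j'
  have hAw : Abase w.1 = 0 := by rw [hw]; exact hrow' j
  rw [Lop_monomial i i' hii]
  have hsub : ({j', j} : Finset ℕ) ⊆ Finset.range m := by
    intro z hz
    rcases Finset.mem_insert.mp hz with h | h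
    · exact Finset.mem_range.mpr (h ▸ hj'm)
    · exact Finset.mem_range.mpr ((Finset.mem_singleton.mp h) ▸ hjm)
  rw [← Finset.sum_subset hsub (fun jv hjv hjv2 => ?_)]
  swap
  · -- vanishing off {j', j}
    have h1 : jv ≠ j' := fun h => hjv2 (by simp [h])
    have h2 : jv ≠ j := fun h => hjv2 (by simp [h])
    by_cases hcond : jv < m ∧ i < n jv ∧ i' < n jv
    · rw [dif_pos hcond]
      have hval : (Dst n m Abase u w x y s t a b) ⟨(i',jv),⟨hcond.1,hcond.2.2⟩⟩ = 0 := by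
        rw [Dst_apply]
        rw [if_neg (by simp only [Subtype.ext_iff, hu, Prod.mk.injEq]; omega),
          if_neg (by simp only [Subtype.ext_iff, hw, Prod.mk.injEq]; omega),
          if_neg (by simp only [Subtype.ext_iff, hx, Prod.mk.injEq]; omega),
          if_neg (by simp only [Subtype.ext_iff, hy, Prod.mk.injEq]; omega)]
        simp [hrow' jv]
      rw [hval]
      simp
    · rw [dif_neg hcond]
  · rw [Finset.sum_pair hjne, dif_pos ⟨hj'm, hiu, hinj'⟩, dif_pos ⟨hjm, hij, hinj⟩]
    have e1 : (⟨(i,j'),⟨hj'm,hiu⟩⟩ : YCell n m) = u := Subtype.ext hu.symm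
    have e2 : (⟨(i,j),⟨hjm, hij⟩⟩ : YCell n m) = x := Subtype.ext hx.symm
    have e3 : (⟨(i',j'),⟨hj'm,hinj'⟩⟩ : YCell n m) = y := Subtype.ext hy.symm
    have e4 : (⟨(i',j),⟨hjm, hinj⟩⟩ : YCell n m) = w := Subtype.ext hw.symm
    rw [e1, e2, e3, e4]
    have hvy : (Dst n m Abase u w x y s t a b) y = b := by
      rw [Dst_apply, if_pos rfl, if_neg huy, if_neg hwy, if_neg hxy, hAy]; omega
    have hvw : (Dst n m Abase u w x y s t a b) w = t := by
      rw [Dst_apply, if_pos rfl, if_neg huw, if_neg hxw, if_neg (Ne.symm hwy), hAw]; omega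
    rw [hvy, hvw, Dst_L1 Abase u w x y s t a b huy hwy hxy hAy,
      Dst_L2 Abase u w x y s t a b hxw huw (Ne.symm hwy) hAw]

end DLAux
namespace DLAux

open MvPolynomial

section IterSec

variable {k : Type*} [Field k] {n : ℕ → ℕ} {m : ℕ}
variable {i i' j j' : ℕ} {Abase : ℕ × ℕ → ℕ}

lemma Rop_iter (hmono : ∀ a b, a ≤ b → b < m → n a ≤ n b)
    (u w x y : YCell n m)
    (hu : u.1 = (i,j')) (hw : w.1 = (i',j)) (hx : x.1 = (i,j)) (hy : y.1 = (i',j'))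
    (hii : i < i') (hjj : j' < j) (hjm : j < m)
    (hcol' : ∀ iv, Abase (iv, j') = 0)
    (α β : ℕ) (r : k) : ∀ kk : ℕ,
    (Rop k n m j' j)^[kk] (monomial (Dst n m Abase u w x y 0 0 α β) r)
      = monomial (Dst n m Abase u w x y 0 kk α (β - kk))
          (r * ((β.descFactorial kk : ℕ) : k)) := by
  intro kk
  induction kk with
  | zero => simp
  | succ kk ih =>
    rw [Function.iterate_succ_apply', ih,
      Rstep hmono u w x y hu hw hx hy hii hjj hjm hcol']
    rw [show ((r * ((β.descFactorial kk : ℕ):k)) * (((0:ℕ)):k)) = 0 from by push_cast; ring]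
    rw [monomial_zero, zero_add]
    rw [show β - kk - 1 = β - (kk+1) from by omega]
    rw [show (r * ((β.descFactorial kk : ℕ):k)) * (((β - kk : ℕ)):k)
        = r * ((β.descFactorial (kk+1) : ℕ) : k) from by
      rw [Nat.descFactorial_succ]; push_cast; ring]

end IterSec

section LopIterSec

variable (k : Type*) [Field k] (n : ℕ → ℕ) (m : ℕ) (Abase : ℕ × ℕ → ℕ)

/-- summand of the `Lop`-iterate expansion -/
noncomputable def LTf (u w x y : YCell n m) (c0 a0 B0 : ℕ) (r : k) (rr tt : ℕ) :
    MvPolynomial (YCell n m) k :=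
  monomial (Dst n m Abase u w x y tt (c0 - (rr - tt)) (a0 + (rr - tt)) (B0 - tt))
    (r * (((rr.choose tt) * (B0.descFactorial tt) * (c0.descFactorial (rr - tt)) : ℕ) : k))

/-- first piece of `Lop` applied to a summand -/
noncomputable def LT1 (u w x y : YCell n m) (c0 a0 B0 : ℕ) (r : k) (rr tt : ℕ) :
    MvPolynomial (YCell n m) k :=
  monomial (Dst n m Abase u w x y (tt+1) (c0 - (rr - tt)) (a0 + (rr - tt)) (B0 - tt - 1))
    ((r * (((rr.choose tt) * (B0.descFactorial tt) * (c0.descFactorial (rr - tt)) : ℕ) : k))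
      * ((B0 - tt : ℕ) : k))

/-- second piece of `Lop` applied to a summand -/
noncomputable def LT2 (u w x y : YCell n m) (c0 a0 B0 : ℕ) (r : k) (rr tt : ℕ) :
    MvPolynomial (YCell n m) k :=
  monomial (Dst n m Abase u w x y tt (c0 - (rr - tt) - 1) (a0 + (rr - tt) + 1) (B0 - tt))
    ((r * (((rr.choose tt) * (B0.descFactorial tt) * (c0.descFactorial (rr - tt)) : ℕ) : k))
      * ((c0 - (rr - tt) : ℕ) : k))

/-- remainder piece in the Pascal splitting -/
noncomputable def LHf (u w x y : YCell n m) (c0 a0 B0 : ℕ) (r : k) (rr tt : ℕ) :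
    MvPolynomial (YCell n m) k :=
  monomial (Dst n m Abase u w x y (tt+1) (c0 - (rr - tt)) (a0 + (rr - tt)) (B0 - tt - 1))
    (r * (((rr.choose (tt+1)) * (B0.descFactorial (tt+1)) * (c0.descFactorial (rr - tt)) : ℕ) : k))

variable {i i' j j' : ℕ}

lemma LT_pascal (u w x y : YCell n m) (c0 a0 B0 : ℕ) (r : k) (rr tt : ℕ) (htt : tt ≤ rr) :
    LTf k n m Abase u w x y c0 a0 B0 r (rr+1) (tt+1)
      = LT1 k n m Abase u w x y c0 a0 B0 r rr tt + LHf k n m Abase u w x y c0 a0 B0 r rr tt := by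
  unfold LTf LT1 LHf
  rw [show rr + 1 - (tt+1) = rr - tt from by omega]
  rw [show B0 - (tt+1) = B0 - tt - 1 from by omega]
  rw [Nat.choose_succ_succ rr tt]
  rw [show (((rr.choose tt + rr.choose (tt+1)) * (B0.descFactorial (tt+1)) * (c0.descFactorial (rr - tt)) : ℕ) : k)
      = ((rr.choose tt * B0.descFactorial (tt+1) * c0.descFactorial (rr - tt) : ℕ) : k)
        + ((rr.choose (tt+1) * B0.descFactorial (tt+1) * c0.descFactorial (rr - tt) : ℕ) : k) from by
    push_cast; ring]
  rw [mul_add, map_add]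
  congr 2
  rw [Nat.descFactorial_succ]
  push_cast; ring

lemma LH_eq_LT2 (u w x y : YCell n m) (c0 a0 B0 : ℕ) (r : k) (rr tt : ℕ) (htt : tt < rr) :
    LHf k n m Abase u w x y c0 a0 B0 r rr tt
      = LT2 k n m Abase u w x y c0 a0 B0 r rr (tt+1) := by
  unfold LHf LT2
  rw [show c0 - (rr - (tt+1)) - 1 = c0 - (rr - tt) from by omega]
  rw [show a0 + (rr - (tt+1)) + 1 = a0 + (rr - tt) from by omega]
  rw [show B0 - (tt+1) = B0 - tt - 1 from by omega]
  congr 1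
  rw [show rr - tt = (rr - (tt+1)) + 1 from by omega,
    Nat.descFactorial_succ c0 (rr - (tt+1))]
  push_cast; ring

lemma LH_top (u w x y : YCell n m) (c0 a0 B0 : ℕ) (r : k) (rr : ℕ) :
    LHf k n m Abase u w x y c0 a0 B0 r rr rr = 0 := by
  unfold LHf
  rw [Nat.choose_succ_self]
  simp

lemma LT2_zero_eq (u w x y : YCell n m) (c0 a0 B0 : ℕ) (r : k) (rr : ℕ) :
    LT2 k n m Abase u w x y c0 a0 B0 r rr 0
      = LTf k n m Abase u w x y c0 a0 B0 r (rr+1) 0 := by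
  unfold LT2 LTf
  rw [show c0 - (rr - 0) - 1 = c0 - (rr + 1 - 0) from by omega]
  rw [show a0 + (rr - 0) + 1 = a0 + (rr + 1 - 0) from by omega]
  congr 1
  rw [show rr + 1 - 0 = (rr - 0) + 1 from by omega,
    Nat.descFactorial_succ c0 (rr - 0), Nat.choose_zero_right, Nat.choose_zero_right]
  push_cast; ring

lemma Lop_iter (u w x y : YCell n m)
    (hu : u.1 = (i,j')) (hw : w.1 = (i',j)) (hx : x.1 = (i,j)) (hy : y.1 = (i',j'))
    (hii : i < i') (hjj : j' < j) (hjm : j < m)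
    (hrow' : ∀ jv, Abase (i', jv) = 0)
    (c0 a0 B0 : ℕ) (r : k) : ∀ rr : ℕ,
    (Lop k n m i i')^[rr] (monomial (Dst n m Abase u w x y 0 c0 a0 B0) r)
      = ∑ tt ∈ Finset.range (rr+1), LTf k n m Abase u w x y c0 a0 B0 r rr tt := by
  intro rr
  induction rr with
  | zero => unfold LTf; simp
  | succ rr ih =>
    rw [Function.iterate_succ_apply', ih, Lop_sum]
    have hstep : ∀ tt ∈ Finset.range (rr+1),
        Lop k n m i i' (LTf k n m Abase u w x y c0 a0 B0 r rr tt)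
          = LT1 k n m Abase u w x y c0 a0 B0 r rr tt
            + LT2 k n m Abase u w x y c0 a0 B0 r rr tt := by
      intro tt _
      unfold LTf LT1 LT2
      exact Lstep u w x y hu hw hx hy hii hjj hjm hrow' _ _ _ _ _
    rw [Finset.sum_congr rfl hstep, Finset.sum_add_distrib]
    rw [Finset.sum_range_succ' (LTf k n m Abase u w x y c0 a0 B0 r (rr+1)) (rr+1)]
    have hsplit : ∀ tt ∈ Finset.range (rr+1),
        LTf k n m Abase u w x y c0 a0 B0 r (rr+1) (tt+1)
          = LT1 k n m Abase u w x y c0 a0 B0 r rr tt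
            + LHf k n m Abase u w x y c0 a0 B0 r rr tt := by
      intro tt htt
      exact LT_pascal k n m Abase u w x y c0 a0 B0 r rr tt (by
        have := Finset.mem_range.mp htt; omega)
    rw [Finset.sum_congr rfl hsplit, Finset.sum_add_distrib]
    have hT2 : ∑ tt ∈ Finset.range (rr+1), LT2 k n m Abase u w x y c0 a0 B0 r rr tt
        = (∑ tt ∈ Finset.range (rr+1), LHf k n m Abase u w x y c0 a0 B0 r rr tt)
          + LTf k n m Abase u w x y c0 a0 B0 r (rr+1) 0 := by
      rw [Finset.sum_range_succ' (LT2 k n m Abase u w x y c0 a0 B0 r rr) rr,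
        Finset.sum_range_succ (LHf k n m Abase u w x y c0 a0 B0 r rr) rr,
        LH_top, add_zero, LT2_zero_eq]
      congr 1
      refine Finset.sum_congr rfl fun tt htt => ?_
      exact (LH_eq_LT2 k n m Abase u w x y c0 a0 B0 r rr tt (Finset.mem_range.mp htt)).symm
    rw [hT2]
    abel

end LopIterSec

end DLAux
namespace DLAux

open MvPolynomial

section KeySec

variable {k : Type*} [Field k] [CharZero k] {n : ℕ → ℕ} {m : ℕ}
variable {i i' j j' : ℕ} {Abase : ℕ × ℕ → ℕ}

lemma key_step (hmono : ∀ a b, a ≤ b → b < m → n a ≤ n b)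
    (u w x y : YCell n m)
    (hu : u.1 = (i,j')) (hw : w.1 = (i',j)) (hx : x.1 = (i,j)) (hy : y.1 = (i',j'))
    (hii : i < i') (hjj : j' < j) (hjm : j < m)
    (hcol' : ∀ iv, Abase (iv, j') = 0) (hrow' : ∀ jv, Abase (i', jv) = 0)
    (p q : ℕ) (hpq : q < p)
    (M : Submodule k (MvPolynomial (YCell n m) k))
    (hgen' : ∀ α, α ≤ q → monomial (Dst n m Abase u w x y 0 0 α (p+q-α)) (1:k) ∈ M)
    (hLM : ∀ P ∈ M, Lop k n m i i' P ∈ M) (hRM : ∀ P ∈ M, Rop k n m j' j P ∈ M) :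
    monomial (Dst n m Abase u w x y 0 0 p q) (1:k) ∈ M := by
  classical
  have hitL : ∀ (kk : ℕ) (P : MvPolynomial (YCell n m) k), P ∈ M →
      (Lop k n m i i')^[kk] P ∈ M := by
    intro kk
    induction kk with
    | zero => intro P hP; exact hP
    | succ kk ih =>
      intro P hP
      rw [Function.iterate_succ_apply']
      exact hLM _ (ih P hP)
  have hitR : ∀ (kk : ℕ) (P : MvPolynomial (YCell n m) k), P ∈ M →
      (Rop k n m j' j)^[kk] P ∈ M := by
    intro kk
    induction kk with
    | zero => intro P hP; exact hP
    | succ kk ih =>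
      intro P hP
      rw [Function.iterate_succ_apply']
      exact hRM _ (ih P hP)
  -- the weight-space monomials
  set mT : ℕ → MvPolynomial (YCell n m) k :=
    fun tt => monomial (Dst n m Abase u w x y tt tt (p - tt) (q - tt)) (1:k) with hmT
  -- the expanded generators
  have hWn : ∀ α, α ≤ q →
      (∑ tt ∈ Finset.range (p+1),
        (((((p-α).choose tt) * (q.choose tt) : ℕ)) : k) • mT tt) ∈ M := by
    intro α hα
    have hkα : α + (p - α) = p := by omega
    -- full iterated vector
    have hWfull : (Lop k n m i i')^[p-α] ((Rop k n m j' j)^[p-α]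
        (monomial (Dst n m Abase u w x y 0 0 α (p+q-α)) (1:k))) ∈ M :=
      hitL _ _ (hitR _ _ (hgen' α hα))
    have hRit : (Rop k n m j' j)^[p-α]
        (monomial (Dst n m Abase u w x y 0 0 α (p+q-α)) (1:k))
        = monomial (Dst n m Abase u w x y 0 (p-α) α q)
            ((((p+q-α).descFactorial (p-α) : ℕ)) : k) := by
      rw [Rop_iter hmono u w x y hu hw hx hy hii hjj hjm hcol' α (p+q-α) (1:k) (p-α)]
      rw [show p + q - α - (p - α) = q from by omega]
      rw [one_mul]
    have hLit : (Lop k n m i i')^[p-α] (monomial (Dst n m Abase u w x y 0 (p-α) α q)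
          ((((p+q-α).descFactorial (p-α) : ℕ)) : k))
        = ∑ tt ∈ Finset.range ((p-α)+1),
            LTf k n m Abase u w x y (p-α) α q ((((p+q-α).descFactorial (p-α) : ℕ)) : k) (p-α) tt :=
      Lop_iter k n m Abase u w x y hu hw hx hy hii hjj hjm hrow' (p-α) α q _ (p-α)
    -- identify the summands
    have hterm : ∀ tt ∈ Finset.range ((p-α)+1),
        LTf k n m Abase u w x y (p-α) α q ((((p+q-α).descFactorial (p-α) : ℕ)) : k) (p-α) tt
          = ((((p+q-α).descFactorial (p-α) * (p-α).factorial
              * (((p-α).choose tt) * (q.choose tt)) : ℕ)) : k) • mT tt := by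
      intro tt htt
      have htt' : tt ≤ p - α := by have := Finset.mem_range.mp htt; omega
      unfold LTf
      rw [show p - α - (p - α - tt) = tt from by omega]
      rw [show α + (p - α - tt) = p - tt from by omega]
      have hco : (p-α).choose tt * (q.descFactorial tt) * ((p-α).descFactorial ((p-α) - tt))
          = (p-α).factorial * ((p-α).choose tt * q.choose tt) := coef_id (p-α) q tt htt'
      rw [hmT]
      rw [smul_monomial, smul_eq_mul, mul_one]
      congr 1
      rw [show (p+q-α).descFactorial (p-α) * (p-α).factorial * (((p-α).choose tt) * (q.choose tt))
          = (p+q-α).descFactorial (p-α) * ((p-α).factorial * (((p-α).choose tt) * (q.choose tt)))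
          from by ring, ← hco]
      push_cast; ring
    -- nonzero normalizer
    have hν : ((((p+q-α).descFactorial (p-α) * (p-α).factorial : ℕ)) : k) ≠ 0 := by
      have h1 : 0 < (p+q-α).descFactorial (p-α) := by
        rw [Nat.descFactorial_eq_factorial_mul_choose]
        exact Nat.mul_pos (Nat.factorial_pos _) (Nat.choose_pos (by omega))
      have h2 : 0 < (p-α).factorial := Nat.factorial_pos _
      exact Nat.cast_ne_zero.mpr (Nat.mul_pos h1 h2).ne'
    have hWn1 : ((((p+q-α).descFactorial (p-α) * (p-α).factorial : ℕ)) : k)⁻¹ •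
        ((Lop k n m i i')^[p-α] ((Rop k n m j' j)^[p-α]
          (monomial (Dst n m Abase u w x y 0 0 α (p+q-α)) (1:k)))) ∈ M :=
      Submodule.smul_mem M _ hWfull
    have hWneq : ((((p+q-α).descFactorial (p-α) * (p-α).factorial : ℕ)) : k)⁻¹ •
        ((Lop k n m i i')^[p-α] ((Rop k n m j' j)^[p-α]
          (monomial (Dst n m Abase u w x y 0 0 α (p+q-α)) (1:k))))
        = ∑ tt ∈ Finset.range (p+1),
            (((((p-α).choose tt) * (q.choose tt) : ℕ)) : k) • mT tt := by
      rw [hRit, hLit, Finset.sum_congr rfl hterm, Finset.smul_sum]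
      have hper : ∀ tt ∈ Finset.range ((p-α)+1),
          ((((p+q-α).descFactorial (p-α) * (p-α).factorial : ℕ)) : k)⁻¹ •
            (((((p+q-α).descFactorial (p-α) * (p-α).factorial
              * (((p-α).choose tt) * (q.choose tt)) : ℕ)) : k) • mT tt)
          = (((((p-α).choose tt) * (q.choose tt) : ℕ)) : k) • mT tt := by
        intro tt _
        rw [smul_smul]
        congr 1
        rw [show ((((p+q-α).descFactorial (p-α) * (p-α).factorial
              * (((p-α).choose tt) * (q.choose tt)) : ℕ)) : k)
            = ((((p+q-α).descFactorial (p-α) * (p-α).factorial : ℕ)) : k)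
              * ((((p-α).choose tt) * (q.choose tt) : ℕ) : k) from by push_cast; ring]
        exact inv_mul_cancel_left₀ hν _
      rw [Finset.sum_congr rfl hper]
      refine Finset.sum_subset (by
        intro z hz
        rw [Finset.mem_range] at *
        omega) (fun tt htt htt2 => ?_)
      have : p - α < tt := by
        rw [Finset.mem_range] at *
        omega
      rw [Nat.choose_eq_zero_of_lt this]
      simp
    rw [hWneq] at hWn1
    exact hWn1
  -- the triangular combinations
  have hV : ∀ q', q' ≤ q →
      (∑ tt ∈ Finset.range (p+1),
        ((if q' ≤ tt then (((p-q').choose (tt-q') : ℕ) : k) else 0)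
          * ((q.choose tt : ℕ) : k)) • mT tt) ∈ M := by
    intro q' hq'
    have hVmem : (∑ α ∈ Finset.range (q'+1),
        ((-1:k)^α * ((q'.choose α : ℕ) : k)) •
          (∑ tt ∈ Finset.range (p+1),
            (((((p-α).choose tt) * (q.choose tt) : ℕ)) : k) • mT tt)) ∈ M :=
      Submodule.sum_mem M fun α hα =>
        Submodule.smul_mem M _ (hWn α (by
          have := Finset.mem_range.mp hα; omega))
    have hVeq : (∑ α ∈ Finset.range (q'+1),
        ((-1:k)^α * ((q'.choose α : ℕ) : k)) •
          (∑ tt ∈ Finset.range (p+1),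
            (((((p-α).choose tt) * (q.choose tt) : ℕ)) : k) • mT tt))
        = ∑ tt ∈ Finset.range (p+1),
            ((if q' ≤ tt then (((p-q').choose (tt-q') : ℕ) : k) else 0)
              * ((q.choose tt : ℕ) : k)) • mT tt := by
      have h1 : ∀ α ∈ Finset.range (q'+1),
          ((-1:k)^α * ((q'.choose α : ℕ) : k)) •
            (∑ tt ∈ Finset.range (p+1),
              (((((p-α).choose tt) * (q.choose tt) : ℕ)) : k) • mT tt)
          = ∑ tt ∈ Finset.range (p+1),
              (((-1:k)^α * ((q'.choose α : ℕ) : k) * ((p-α).choose tt : ℕ))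
                * ((q.choose tt : ℕ) : k)) • mT tt := by
        intro α _
        rw [Finset.smul_sum]
        refine Finset.sum_congr rfl fun tt _ => ?_
        rw [smul_smul]
        congr 1
        push_cast; ring
      rw [Finset.sum_congr rfl h1, Finset.sum_comm]
      refine Finset.sum_congr rfl fun tt _ => ?_
      rw [← Finset.sum_smul]
      congr 1
      rw [← Finset.sum_mul]
      congr 1
      exact alt_sum_choose q' p tt (by omega)
    rw [hVeq] at hVmem
    exact hVmem
  -- downward induction
  have tri : ∀ e : ℕ, ∀ tt, tt ≤ q → q - tt ≤ e → mT tt ∈ M := by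
    intro e
    induction e with
    | zero =>
      intro tt htt he
      have htq : tt = q := by omega
      rw [htq]
      have h := hV q le_rfl
      have heq : (∑ tt' ∈ Finset.range (p+1),
          ((if q ≤ tt' then (((p-q).choose (tt'-q) : ℕ) : k) else 0)
            * ((q.choose tt' : ℕ) : k)) • mT tt') = ((q.choose q : ℕ) : k) • mT q := by
        rw [Finset.sum_eq_single q]
        · rw [if_pos le_rfl, Nat.sub_self, Nat.choose_zero_right]
          norm_num
        · intro tt' _ hne
          rcases lt_or_gt_of_ne hne with hlt | hgt
          · rw [if_neg (by omega)]
            simp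
          · rw [Nat.choose_eq_zero_of_lt (by omega : q < tt')]
            simp
        · intro hnot
          exact absurd (Finset.mem_range.mpr (by omega)) hnot
      rw [heq] at h
      have hc : ((q.choose q : ℕ) : k) ≠ 0 :=
        Nat.cast_ne_zero.mpr (Nat.choose_pos le_rfl).ne'
      have := Submodule.smul_mem M (((q.choose q : ℕ) : k))⁻¹ h
      rw [smul_smul, inv_mul_cancel₀ hc, one_smul] at this
      exact this
    | succ e ih =>
      intro tt htt he
      by_cases heq : q - tt ≤ e
      · exact ih tt htt heq
      have hte : q - tt = e + 1 := by omega
      have h := hV tt htt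
      -- split the sum at tt
      have hsplit : (∑ tt' ∈ Finset.range (p+1),
          ((if tt ≤ tt' then (((p-tt).choose (tt'-tt) : ℕ) : k) else 0)
            * ((q.choose tt' : ℕ) : k)) • mT tt')
          = ((q.choose tt : ℕ) : k) • mT tt
            + ∑ tt' ∈ Finset.Ico (tt+1) (p+1),
              ((((p-tt).choose (tt'-tt) : ℕ) : k) * ((q.choose tt' : ℕ) : k)) • mT tt' := by
        rw [Finset.range_eq_Ico,
          ← Finset.sum_Ico_consecutive _ (Nat.zero_le (tt+1)) (by omega : tt+1 ≤ p+1)]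
        congr 1
        · rw [← Finset.range_eq_Ico, Finset.sum_range_succ]
          rw [Finset.sum_eq_zero fun tt' htt' => by
            rw [if_neg (by have := Finset.mem_range.mp htt'; omega)]
            simp]
          rw [zero_add, if_pos le_rfl, Nat.sub_self, Nat.choose_zero_right]
          norm_num
        · refine Finset.sum_congr rfl fun tt' htt' => ?_
          rw [if_pos (by have := Finset.mem_Ico.mp htt'; omega)]
      rw [hsplit] at h
      have htail : (∑ tt' ∈ Finset.Ico (tt+1) (p+1),
          ((((p-tt).choose (tt'-tt) : ℕ) : k) * ((q.choose tt' : ℕ) : k)) • mT tt') ∈ M := by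
        refine Submodule.sum_mem M fun tt' htt' => ?_
        have h5 := Finset.mem_Ico.mp htt'
        by_cases hq' : tt' ≤ q
        · exact Submodule.smul_mem M _ (ih tt' hq' (by omega))
        · rw [Nat.choose_eq_zero_of_lt (by omega : q < tt')]
          norm_num
      have hmem : ((q.choose tt : ℕ) : k) • mT tt ∈ M := by
        have := Submodule.sub_mem M h htail
        simpa using this
      have hc : ((q.choose tt : ℕ) : k) ≠ 0 :=
        Nat.cast_ne_zero.mpr (Nat.choose_pos htt).ne'
      have := Submodule.smul_mem M (((q.choose tt : ℕ) : k))⁻¹ hmem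
      rw [smul_smul, inv_mul_cancel₀ hc, one_smul] at this
      exact this
  have := tri q 0 (Nat.zero_le q) (by omega)
  rw [hmT] at this
  simpa using this

end KeySec

end DLAux
namespace DLAux

open MvPolynomial

variable {k : Type*} [Field k] {n : ℕ → ℕ} {m : ℕ}

lemma row_sum_single (B : ℕ × ℕ → ℕ) (r j0 : ℕ) (hj0 : j0 < m)
    (hz : ∀ jv, jv < m → jv ≠ j0 → B (r, jv) = 0) : horW m B r = B (r, j0) := by
  unfold horW
  rw [Finset.sum_eq_single j0]
  · intro jv hjv hne
    exact hz jv (Finset.mem_range.mp hjv) hne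
  · intro hnot
    exact absurd (Finset.mem_range.mpr hj0) hnot

lemma two_row_wsum (f g wt : ℕ → ℕ) {R i i' : ℕ} (hii : i ≠ i') (hiR : i < R) (hi'R : i' < R)
    (hoff : ∀ r, r ≠ i → r ≠ i' → f r = g r) :
    ∑ r ∈ Finset.range R, wt r * f r + (wt i * g i + wt i' * g i')
      = ∑ r ∈ Finset.range R, wt r * g r + (wt i * f i + wt i' * f i') := by
  classical
  have hiT : i ∈ Finset.range R := Finset.mem_range.mpr hiR
  have hi'T : i' ∈ (Finset.range R).erase i :=
    Finset.mem_erase.mpr ⟨Ne.symm hii, Finset.mem_range.mpr hi'R⟩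
  rw [← Finset.add_sum_erase _ (fun r => wt r * f r) hiT,
    ← Finset.add_sum_erase _ (fun r => wt r * f r) hi'T,
    ← Finset.add_sum_erase _ (fun r => wt r * g r) hiT,
    ← Finset.add_sum_erase _ (fun r => wt r * g r) hi'T]
  have htail : ∑ r ∈ ((Finset.range R).erase i).erase i', wt r * f r
      = ∑ r ∈ ((Finset.range R).erase i).erase i', wt r * g r := by
    refine Finset.sum_congr rfl fun r hr => ?_
    rw [hoff r (Finset.ne_of_mem_erase (Finset.mem_of_mem_erase hr))
      (Finset.ne_of_mem_erase hr)]
  omega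

lemma expF_two (Abase : ℕ × ℕ → ℕ) (c c' : ℕ × ℕ) (hcY : c.2 < m ∧ c.1 < n c.2)
    (hc'Y : c'.2 < m ∧ c'.1 < n c'.2) (hcc' : c ≠ c')
    (hAbc : Abase c = 0) (hAbc' : Abase c' = 0) (vα vβ : ℕ) :
    expF n m (fun z => if z = c then vα else if z = c' then vβ else Abase z)
      = expF n m Abase + Finsupp.single (⟨c,hcY⟩ : YCell n m) vα
          + Finsupp.single (⟨c',hc'Y⟩ : YCell n m) vβ := by
  rw [← expF_indicator c hcY vα, ← expF_indicator c' hc'Y vβ, ← expF_add, ← expF_add]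
  congr 1
  funext z
  by_cases h1 : z = c
  · subst h1
    rw [if_pos rfl, if_pos rfl, if_neg hcc', hAbc]
    omega
  · rw [if_neg h1, if_neg h1]
    by_cases h2 : z = c'
    · subst h2
      rw [if_pos rfl, if_pos rfl, hAbc']
      omega
    · rw [if_neg h2, if_neg h2]
      omega

lemma Dst_zero2 (Abase : ℕ × ℕ → ℕ) (u w x y : YCell n m) (a b : ℕ) :
    Dst n m Abase u w x y 0 0 a b
      = expF n m Abase + Finsupp.single x a + Finsupp.single y b := by
  unfold Dst
  simp

end DLAux
set_option maxHeartbeats 1000000 in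
/-- Lemma 4.2.  Let `A` be an array supported on the staircase
corners and let `λ` be the partition of its values.  Then `v^A` lies in the
smallest `k`-subspace of `k[v]` containing the monomials `v^B` for all DL-dense
arrays `B` whose value partition dominates `λ` (i.e. `B ∈ DL_n̄(μ)` with `μ ≥ λ`,
`|μ| = |λ|`) and invariant under all operators `L_{ab}` and `R_{ab}`.  (The value
partition of an array supported on `Sc_n̄` is the dominant part of its row-sum
vector `hor(·)`, since each row contains at most one staircase corner.) -/
theorem supported_monomial_in_dl_span (k : Type*) [Field k] [CharZero k]
    (m : ℕ) (hm : 0 < m) (n : ℕ → ℕ) (hn0 : 0 < n 0)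
    (hmono : ∀ j j', j ≤ j' → j' < m → n j ≤ n j')
    (S : Set (ℕ × ℕ)) (hS : IsScSet n m S)
    (A : ℕ × ℕ → ℕ) (hA : ∀ c, c ∉ S → A c = 0)
    (M : Submodule k (MvPolynomial (YCell n m) k))
    (hgen : ∀ B : ℕ × ℕ → ℕ, DLDense S B → DomLE (horW m A) (horW m B) →
      monArr k n m B ∈ M)
    (hL : ∀ a b : ℕ, a < b → b < n (m - 1) → ∀ p ∈ M, Lop k n m a b p ∈ M)
    (hR : ∀ a b : ℕ, a < b → b < m → ∀ p ∈ M, Rop k n m a b p ∈ M) :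
    monArr k n m A ∈ M := by
  classical
  obtain ⟨l, ⟨hcorn, _hcover⟩, hSeq⟩ := hS
  have hmemS : ∀ c : ℕ × ℕ, c ∈ S ↔ c ∈ l := fun c => by rw [hSeq]; exact Iff.rfl
  have hSY : ∀ c : ℕ × ℕ, c ∈ S → c.2 < m ∧ c.1 < n c.2 := by
    intro c hc
    obtain ⟨t, ht⟩ := List.mem_iff_get.mp ((hmemS c).mp hc)
    have h := hcorn t.1 t.2
    rw [ht] at h
    exact ⟨h.1, h.2.1⟩
  have hSd : ∀ c : ℕ×ℕ, c ∈ S → ∀ c' : ℕ×ℕ, c' ∈ S → c ≠ c' →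
      c.1 ≠ c'.1 ∧ c.2 ≠ c'.2 := by
    intro c hc c' hc' hne
    obtain ⟨t, ht⟩ := List.mem_iff_get.mp ((hmemS c).mp hc)
    obtain ⟨t', ht'⟩ := List.mem_iff_get.mp ((hmemS c').mp hc')
    have key : ∀ (s s' : Fin l.length), s.1 < s'.1 →
        (l.get s').1 ≠ (l.get s).1 ∧ (l.get s').2 ≠ (l.get s).2 := by
      intro s s' hss
      have h := hcorn s'.1 s'.2
      have hmemtake : l.get s ∈ l.take s'.1 := by
        rw [List.mem_take_iff_getElem]
        refine ⟨s.1, by simp [s.2]; omega, by simp⟩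
      constructor
      · intro he
        exact h.2.2.1 ⟨l.get s, hmemtake, he.symm⟩
      · intro he
        exact h.2.2.2.1 ⟨l.get s, hmemtake, he.symm⟩
    rcases lt_trichotomy t.1 t'.1 with hlt | heq | hgt
    · have hk := key t t' hlt
      rw [ht, ht'] at hk
      exact ⟨Ne.symm hk.1, Ne.symm hk.2⟩
    · exfalso
      apply hne
      rw [← ht, ← ht']
      congr 1
      exact Fin.ext heq
    · have hk := key t' t hgt
      rw [ht, ht'] at hk
      exact hk
  set RB := n (m-1) with hRB
  have hrowb : ∀ c : ℕ×ℕ, c ∈ S → c.1 < RB := by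
    intro c hc
    have h := hSY c hc
    exact lt_of_lt_of_le h.2 (hmono c.2 (m-1) (by omega) (by omega))
  have hvan : ∀ (B : ℕ×ℕ→ℕ), (∀ z, z ∉ S → B z = 0) → ∀ r, RB ≤ r → horW m B r = 0 := by
    intro B hB r hr
    refine Finset.sum_eq_zero fun jv _ => ?_
    refine hB _ fun hmem => ?_
    have := hrowb _ hmem
    simp only at this
    omega
  set N0 := ∑ r ∈ Finset.range RB, horW m A r with hN0
  -- total row-sum is constant along the recursion
  have htot : ∀ (B : ℕ×ℕ→ℕ), (∀ z, z ∉ S → B z = 0) → DomLE (horW m A) (horW m B) →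
      ∑ r ∈ Finset.range RB, horW m B r = N0 := by
    intro B hB hdom
    obtain ⟨_, N', hN'⟩ := hdom
    have h1 : domSum (horW m A) (max N' RB) = N0 :=
      DLAux.domSum_eq_total (hvan A hA) (le_max_right _ _)
    have h2 : domSum (horW m B) (max N' RB) = ∑ r ∈ Finset.range RB, horW m B r :=
      DLAux.domSum_eq_total (hvan B hB) (le_max_right _ _)
    rw [← h2, ← hN' _ (le_max_left _ _), h1]
  suffices H : ∀ (NN : ℕ) (B : ℕ × ℕ → ℕ),
      (RB * N0 + 1) - (∑ r ∈ Finset.range RB, r * horW m B r) = NN →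
      (∀ z, z ∉ S → B z = 0) → DomLE (horW m A) (horW m B) → monArr k n m B ∈ M by
    exact H _ A rfl hA (DLAux.domLE_refl _)
  intro NN
  induction NN using Nat.strong_induction_on with
  | _ NN IH =>
  intro B hμ hBsupp hdom
  by_cases hinv : ∃ cc : (ℕ×ℕ)×(ℕ×ℕ), cc.1 ∈ S ∧ cc.2 ∈ S ∧ ScLE cc.1 cc.2
      ∧ B cc.2 < B cc.1
  · -- straightening step
    obtain ⟨⟨c, c'⟩, hcS, hc'S, hord, hval⟩ := hinv
    dsimp only at hcS hc'S hord hval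
    have hcY := hSY c hcS
    have hc'Y := hSY c' hc'S
    have hccne : c ≠ c' := fun h => by rw [h] at hval; omega
    have hd := hSd c hcS c' hc'S hccne
    have hii : c.1 < c'.1 := lt_of_le_of_ne hord.1 hd.1
    have hjj : c'.2 < c.2 := lt_of_le_of_ne hord.2 (Ne.symm hd.2)
    set p := B c with hp
    set q := B c' with hq
    -- the four cells
    have hxY : c.2 < m ∧ c.1 < n c.2 := hcY
    have hyY : c'.2 < m ∧ c'.1 < n c'.2 := hc'Y
    have huY : c'.2 < m ∧ c.1 < n c'.2 := ⟨hc'Y.1, lt_trans hii hc'Y.2⟩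
    have hwY : c.2 < m ∧ c'.1 < n c.2 :=
      ⟨hcY.1, lt_of_lt_of_le hc'Y.2 (hmono c'.2 c.2 (le_of_lt hjj) hcY.1)⟩
    set Abase : ℕ × ℕ → ℕ := fun z => if z = c ∨ z = c' then 0 else B z with hAbase
    have hAbaseS : ∀ z, z ≠ c → z ≠ c' → z ∉ S → Abase z = 0 := by
      intro z h1 h2 h3
      rw [hAbase]
      simp only
      rw [if_neg (by tauto)]
      exact hBsupp z h3
    have hcol' : ∀ iv, Abase (iv, c'.2) = 0 := by
      intro iv
      rw [hAbase]
      simp only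
      by_cases hz : (iv, c'.2) = c ∨ (iv, c'.2) = c'
      · rw [if_pos hz]
      · rw [if_neg hz]
        refine hBsupp _ fun hmem => ?_
        push_neg at hz
        have := (hSd _ hmem c' hc'S hz.2).2
        simp at this
    have hrow' : ∀ jv, Abase (c'.1, jv) = 0 := by
      intro jv
      rw [hAbase]
      simp only
      by_cases hz : (c'.1, jv) = c ∨ (c'.1, jv) = c'
      · rw [if_pos hz]
      · rw [if_neg hz]
        refine hBsupp _ fun hmem => ?_
        push_neg at hz
        have := (hSd _ hmem c' hc'S hz.2).1
        simp at this
    have hAbc : Abase c = 0 := by rw [hAbase]; simp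
    have hAbc' : Abase c' = 0 := by rw [hAbase]; simp
    -- row values for arrays of the family
    have hrowz : ∀ (v v' : ℕ) (jv : ℕ), jv < m → jv ≠ c.2 →
        (fun z => if z = c then v else if z = c' then v' else B z) (c.1, jv) = 0 := by
      intro v v' jv _ hne
      simp only
      rw [if_neg (fun h => hne (congrArg Prod.snd h)),
        if_neg (fun h => absurd (congrArg Prod.fst h) (by omega))]
      refine hBsupp _ fun hmem => ?_
      exact absurd rfl (hSd _ hmem c hcS (fun h => hne (congrArg Prod.snd h))).1
    have hrowz' : ∀ (v v' : ℕ) (jv : ℕ), jv < m → jv ≠ c'.2 →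
        (fun z => if z = c then v else if z = c' then v' else B z) (c'.1, jv) = 0 := by
      intro v v' jv _ hne
      simp only
      rw [if_neg (fun h => absurd (congrArg Prod.fst h) (by omega)),
        if_neg (fun h => hne (congrArg Prod.snd h))]
      refine hBsupp _ fun hmem => ?_
      exact absurd rfl (hSd _ hmem c' hc'S (fun h => hne (congrArg Prod.snd h))).1
    have hBform : B = fun z => if z = c then p else if z = c' then q else B z := by
      funext z
      by_cases h1 : z = c
      · rw [if_pos h1, h1, hp]
      · rw [if_neg h1]
        by_cases h2 : z = c'
        · rw [if_pos h2, h2, hq]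
        · rw [if_neg h2]
    -- horW values
    have hBrow : horW m B c.1 = p := by
      rw [hBform]
      rw [DLAux.row_sum_single _ c.1 c.2 hcY.1 (hrowz p q)]
      simp only [Prod.mk.eta]
      simp
    have hBrow' : horW m B c'.1 = q := by
      rw [hBform]
      rw [DLAux.row_sum_single _ c'.1 c'.2 hc'Y.1 (hrowz' p q)]
      simp only [Prod.mk.eta]
      simp [Ne.symm hccne]
    -- the modified arrays
    have hmain : ∀ α : ℕ, α ≤ q →
        monArr k n m (fun z => if z = c then α else if z = c' then p + q - α else B z) ∈ M := by
      intro α hα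
      set Aα : ℕ × ℕ → ℕ :=
        fun z => if z = c then α else if z = c' then p + q - α else B z with hAαdef
      have hαsupp : ∀ z, z ∉ S → Aα z = 0 := by
        intro z hz
        rw [hAαdef]
        simp only
        rw [if_neg (fun h => hz (by rw [h]; exact hcS)),
          if_neg (fun h => hz (by rw [h]; exact hc'S))]
        exact hBsupp z hz
      have hαrow : horW m Aα c.1 = α := by
        rw [hAαdef, DLAux.row_sum_single _ c.1 c.2 hcY.1 (hrowz α (p+q-α))]
        simp only [Prod.mk.eta]
        simp
      have hαrow' : horW m Aα c'.1 = p + q - α := by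
        rw [hAαdef, DLAux.row_sum_single _ c'.1 c'.2 hc'Y.1 (hrowz' α (p+q-α))]
        simp only [Prod.mk.eta]
        simp [Ne.symm hccne]
      have hoff : ∀ r, r ≠ c.1 → r ≠ c'.1 → horW m B r = horW m Aα r := by
        intro r h1 h2
        refine Finset.sum_congr rfl fun jv _ => ?_
        rw [hAαdef]
        simp only
        rw [if_neg (fun h => h1 (congrArg Prod.fst h)),
          if_neg (fun h => h2 (congrArg Prod.fst h))]
      have hstep : DomLE (horW m B) (horW m Aα) := by
        refine DLAux.domLE_transfer (hvan B hBsupp) (hvan Aα hαsupp)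
          (by omega) (hrowb c hcS) (hrowb c' hc'S) hoff ?_ ?_
        · rw [hBrow, hBrow', hαrow, hαrow']
          omega
        · rw [hBrow, hBrow', hαrow, hαrow']
          have : q < p := hval
          omega
      have hdomα : DomLE (horW m A) (horW m Aα) := DLAux.domLE_trans hdom hstep
      -- measure decrease
      have hWB : ∑ r ∈ Finset.range RB, r * horW m B r
          + (c.1 * horW m Aα c.1 + c'.1 * horW m Aα c'.1)
          = ∑ r ∈ Finset.range RB, r * horW m Aα r
          + (c.1 * horW m B c.1 + c'.1 * horW m B c'.1) :=
        DLAux.two_row_wsum (horW m B) (horW m Aα) (fun r => r) (by omega)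
          (hrowb c hcS) (hrowb c' hc'S) hoff
      rw [hBrow, hBrow', hαrow, hαrow'] at hWB
      have hatom : c.1 * p + c'.1 * q < c.1 * α + c'.1 * (p + q - α) := by
        have h1 : q < p := hval
        zify [show α ≤ p + q from by omega]
        have hii' : (0:ℤ) < (c'.1 : ℤ) - c.1 := by
          have := hii; omega
        have hpα : (0:ℤ) < (p : ℤ) - α := by omega
        nlinarith [mul_pos hii' hpα]
      have hbound : ∑ r ∈ Finset.range RB, r * horW m Aα r ≤ RB * N0 := by
        calc ∑ r ∈ Finset.range RB, r * horW m Aα r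
            ≤ ∑ r ∈ Finset.range RB, RB * horW m Aα r := by
              refine Finset.sum_le_sum fun r hr => ?_
              exact Nat.mul_le_mul_right _ (le_of_lt (Finset.mem_range.mp hr))
          _ = RB * ∑ r ∈ Finset.range RB, horW m Aα r := by rw [Finset.mul_sum]
          _ = RB * N0 := by rw [htot Aα hαsupp hdomα]
      have hlt : (RB * N0 + 1) - (∑ r ∈ Finset.range RB, r * horW m Aα r) < NN := by
        omega
      exact IH _ hlt Aα rfl hαsupp hdomα
    -- translate into Dst-monomials and apply the key step
    have hxYc : (c.1, c.2).2 < m ∧ (c.1, c.2).1 < n (c.1, c.2).2 := by simpa using hcY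
    have hyYc : (c'.1, c'.2).2 < m ∧ (c'.1, c'.2).1 < n (c'.1, c'.2).2 := by simpa using hc'Y
    set uu : YCell n m := ⟨(c.1, c'.2), huY⟩ with huu
    set ww : YCell n m := ⟨(c'.1, c.2), hwY⟩ with hww
    set xx : YCell n m := ⟨(c.1, c.2), hxYc⟩ with hxx
    set yy : YCell n m := ⟨(c'.1, c'.2), hyYc⟩ with hyy
    have hexp : ∀ (vα vβ : ℕ),
        DLAux.expF n m (fun z => if z = c then vα else if z = c' then vβ else Abase z)
          = DLAux.Dst n m Abase uu ww xx yy 0 0 vα vβ := by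
      intro vα vβ
      rw [DLAux.Dst_zero2]
      have h1 := DLAux.expF_two (n := n) (m := m) Abase c c' hcY hc'Y hccne hAbc hAbc' vα vβ
      rw [h1]
    have hfuneq : ∀ (vα vβ : ℕ),
        (fun z => if z = c then vα else if z = c' then vβ else B z)
          = (fun z => if z = c then vα else if z = c' then vβ else Abase z) := by
      intro vα vβ
      funext z
      by_cases h1 : z = c
      · rw [if_pos h1, if_pos h1]
      · rw [if_neg h1, if_neg h1]
        by_cases h2 : z = c'
        · rw [if_pos h2, if_pos h2]
        · rw [if_neg h2, if_neg h2, hAbase]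
          simp only
          rw [if_neg (by tauto)]
    have hgen' : ∀ α, α ≤ q →
        MvPolynomial.monomial (DLAux.Dst n m Abase uu ww xx yy 0 0 α (p+q-α)) (1:k) ∈ M := by
      intro α hα
      have h1 := hmain α hα
      rw [DLAux.monArr_eq, hfuneq, hexp] at h1
      exact h1
    have hkey := DLAux.key_step (i := c.1) (i' := c'.1) (j := c.2) (j' := c'.2)
      (Abase := Abase) hmono uu ww xx yy rfl rfl rfl rfl
      hii hjj hcY.1 hcol' hrow' p q hval M hgen'
      (fun P hP => hL c.1 c'.1 hii
        (lt_of_lt_of_le hc'Y.2 (hmono c'.2 (m-1) (by omega) (by omega))) P hP)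
      (fun P hP => hR c'.2 c.2 hjj hcY.1 P hP)
    rw [DLAux.monArr_eq, hBform, hfuneq, hexp]
    exact hkey
  · -- dense base case
    refine hgen B ⟨hBsupp, ?_⟩ hdom
    intro c c' hc hc' hord
    by_contra hlt
    exact hinv ⟨(c, c'), hc, hc', hord, show B c' < B c by omega⟩
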